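/- For n ≥ 2, the automorphism group of the Morse complex of ∂Δⁿ is isomorphic to Aut(∂Δⁿ) × Z/2Z, i.e., to S_{n+1} × Z_2, via (f, i) ↦ f_* ∘ π_*^i, where π_* is the involution induced by the complementation map σ ↦ δ − σ. -/

import Mathlib

open Finset

/-- An abstract simplicial complex on vertex type `V`. -/
structure SComplex (V : Type) [DecidableEq V] where
  faces : Set (Finset V)
  nonempty_of_mem : ∀ {s : Finset V}, s ∈ faces → s.Nonempty
  down_closed : ∀ {s t : Finset V}, s ∈ faces → t ⊆ s → t.Nonempty → t ∈ faces

variable {V : Type} [DecidableEq V]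

/-- A primitive vector: a codimension-1 face pair of simplices of `K`. -/
def IsPrimitive (K : SComplex V) (p : Finset V × Finset V) : Prop :=
  p.1 ∈ K.faces ∧ p.2 ∈ K.faces ∧ p.1 ⊆ p.2 ∧ p.2.card = p.1.card + 1

/-- A discrete vector field on `K`. -/
def IsDVF (K : SComplex V) (W : Set (Finset V × Finset V)) : Prop :=
  (∀ p ∈ W, IsPrimitive K p) ∧
    ∀ p ∈ W, ∀ q ∈ W, p ≠ q →
      p.1 ≠ q.1 ∧ p.1 ≠ q.2 ∧ p.2 ≠ q.1 ∧ p.2 ≠ q.2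

/-- `W` admits a nontrivial closed `V`-path. -/
def HasClosedPath (W : Set (Finset V × Finset V)) : Prop :=
  ∃ (k : ℕ) (α β : ℕ → Finset V), 1 ≤ k ∧
    (∀ i < k, (α i, β i) ∈ W) ∧
    (∀ i < k, α (i + 1) ⊆ β i ∧ (β i).card = (α (i + 1)).card + 1 ∧ α (i + 1) ≠ α i) ∧
    α k = α 0

/-- A gradient vector field on `K`. -/
def IsGVF (K : SComplex V) (W : Set (Finset V × Finset V)) : Prop :=
  IsDVF K W ∧ ¬ HasClosedPath W

theorem IsGVF.mono {K : SComplex V} {W W' : Set (Finset V × Finset V)}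
    (h : IsGVF K W) (hsub : W' ⊆ W) : IsGVF K W' := by
  obtain ⟨⟨h1, h2⟩, h3⟩ := h
  refine ⟨⟨fun p hp => h1 p (hsub hp), fun p hp q hq hpq => h2 p (hsub hp) q (hsub hq) hpq⟩, ?_⟩
  rintro ⟨k, α, β, hk, hW, hrest, hclosed⟩
  exact h3 ⟨k, α, β, hk, fun i hi => hsub (hW i hi), hrest, hclosed⟩

/-- The vertices of the Morse complex of `K`: primitive vectors. -/
def MVert (K : SComplex V) : Type := {p : Finset V × Finset V // IsPrimitive K p}

instance (K : SComplex V) : DecidableEq (MVert K) :=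
  Subtype.instDecidableEq

/-- The Morse complex of `K`: simplices are gradient vector fields. -/
def morse (K : SComplex V) : SComplex (MVert K) where
  faces := {s : Finset (MVert K) | s.Nonempty ∧
    IsGVF K {p | ∃ x ∈ s, (x : {p : Finset V × Finset V // IsPrimitive K p}).val = p}}
  nonempty_of_mem := fun h => h.1
  down_closed := by
    rintro s t ⟨-, hgvf⟩ hts htne
    exact ⟨htne, hgvf.mono (by rintro p ⟨x, hx, rfl⟩; exact ⟨x, hts hx, rfl⟩)⟩

/-- The image of a primitive vector under a vertex map. -/
def indVert (e : V → V) (p : Finset V × Finset V) : Finset V × Finset V :=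
  (p.1.image e, p.2.image e)

/-- The automorphism group of a simplicial complex, as a subgroup of the
permutations of its vertex set. -/
def autK (K : SComplex V) : Subgroup (Equiv.Perm V) where
  carrier := {e | ∀ s : Finset V, s ∈ K.faces ↔ s.image e ∈ K.faces}
  one_mem' := by intro s; simp
  mul_mem' := by
    intro a b ha hb s
    rw [hb s]
    have : (s.image b).image a = s.image (a * b) := by
      rw [Finset.image_image]; rfl
    rw [ha (s.image b), this]
  inv_mem' := by
    intro a ha s
    have := ha (s.image ⇑(a⁻¹))
    have h2 : (s.image ⇑(a⁻¹)).image ⇑a = s := by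
      rw [Finset.image_image]
      simp [Function.comp_def]
    rw [h2] at this
    exact this.symm

/-- The Hasse diagram of `K`, as a simple graph on the simplices of `K`. -/
def hasse (K : SComplex V) : SimpleGraph {s : Finset V // s ∈ K.faces} where
  Adj σ τ := (σ.1 ⊆ τ.1 ∧ τ.1.card = σ.1.card + 1) ∨ (τ.1 ⊆ σ.1 ∧ σ.1.card = τ.1.card + 1)
  symm := by tauto
  loopless := ⟨by rintro σ (⟨-, h⟩ | ⟨-, h⟩) <;> omega⟩

/-- The automorphism group of a simple graph, as a subgroup of the permutations
of its vertex set. -/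
def autG {α : Type} (G : SimpleGraph α) : Subgroup (Equiv.Perm α) where
  carrier := {e | ∀ u v, G.Adj (e u) (e v) ↔ G.Adj u v}
  one_mem' := by intro u v; simp
  mul_mem' := by
    intro a b ha hb u v
    rw [show ((a * b : Equiv.Perm α) u) = a (b u) from rfl,
      show ((a * b : Equiv.Perm α) v) = a (b v) from rfl, ha, hb]
  inv_mem' := by
    intro a ha u v
    have := ha (a⁻¹ u) (a⁻¹ v)
    simpa using this.symm

/-- The boundary of the `n`-simplex: all nonempty proper subsets of the
`(n+1)`-element vertex set. -/
def bdSimplex (n : ℕ) : SComplex (Fin (n + 1)) where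
  faces := {s | s.Nonempty ∧ s ≠ Finset.univ}
  nonempty_of_mem := fun h => h.1
  down_closed := by
    rintro s t ⟨-, hs⟩ hts htne
    refine ⟨htne, fun h => hs ?_⟩
    subst h
    exact Finset.univ_subset_iff.mp hts

namespace MorseAux
open Finset Equiv

variable {n : ℕ}

lemma mem_bd {s : Finset (Fin (n+1))} :
    s ∈ (bdSimplex n).faces ↔ s.Nonempty ∧ s ≠ Finset.univ := Iff.rfl

lemma mem_bd_card {s : Finset (Fin (n+1))} :
    s ∈ (bdSimplex n).faces ↔ 1 ≤ s.card ∧ s.card ≤ n := by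
  rw [mem_bd]
  constructor
  · rintro ⟨h1, h2⟩
    refine ⟨Finset.card_pos.mpr h1, ?_⟩
    have hle := Finset.card_le_univ s
    simp only [Finset.card_univ, Fintype.card_fin] at hle
    rcases Nat.lt_or_ge s.card (n+1) with h | h
    · omega
    · exfalso; exact h2 (Finset.eq_univ_of_card s (by simpa using by omega))
  · rintro ⟨h1, h2⟩
    refine ⟨Finset.card_pos.mp h1, fun h => ?_⟩
    rw [h, Finset.card_univ, Fintype.card_fin] at h2; omega

lemma card_le_of_bd {s : Finset (Fin (n+1))} (h : s ∈ (bdSimplex n).faces) : s.card ≤ n :=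
  (mem_bd_card.mp h).2

lemma card_pos_of_bd {s : Finset (Fin (n+1))} (h : s ∈ (bdSimplex n).faces) : 1 ≤ s.card :=
  (mem_bd_card.mp h).1

lemma compl_mem_bd {s : Finset (Fin (n+1))} (h : s ∈ (bdSimplex n).faces) :
    sᶜ ∈ (bdSimplex n).faces := by
  rw [mem_bd_card] at h ⊢
  have : sᶜ.card = (n+1) - s.card := by
    rw [Finset.card_compl]; simp
  omega

lemma card_compl_bd (s : Finset (Fin (n+1))) : sᶜ.card = (n+1) - s.card := by
  rw [Finset.card_compl]; simp

/-- Every permutation of the vertices is an automorphism of `∂Δⁿ`. -/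
lemma perm_mem_autK_bd (e : Equiv.Perm (Fin (n+1))) : e ∈ autK (bdSimplex n) := by
  intro s
  rw [mem_bd_card, mem_bd_card, Finset.card_image_of_injective _ e.injective]

/-- complement map on pairs. -/
def cmap (p : Finset (Fin (n+1)) × Finset (Fin (n+1))) :
    Finset (Fin (n+1)) × Finset (Fin (n+1)) := (p.2ᶜ, p.1ᶜ)

lemma cmap_cmap (p : Finset (Fin (n+1)) × Finset (Fin (n+1))) : cmap (cmap p) = p := by
  simp [cmap]

lemma cmap_inj : Function.Injective (cmap (n := n)) := by
  intro p q h
  rw [← cmap_cmap p, h, cmap_cmap]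

lemma prim_cmap {p} (hp : IsPrimitive (bdSimplex n) p) : IsPrimitive (bdSimplex n) (cmap p) := by
  obtain ⟨h1, h2, h3, h4⟩ := hp
  have c1 := card_le_of_bd h1
  have c2 := card_pos_of_bd h1
  refine ⟨compl_mem_bd h2, compl_mem_bd h1, ?_, ?_⟩
  · exact Finset.compl_subset_compl.mpr h3
  · show p.1ᶜ.card = p.2ᶜ.card + 1
    rw [card_compl_bd, card_compl_bd]; omega

lemma prim_ind {e : Equiv.Perm (Fin (n+1))} {p} (hp : IsPrimitive (bdSimplex n) p) :
    IsPrimitive (bdSimplex n) (indVert ⇑e p) := by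
  obtain ⟨h1, h2, h3, h4⟩ := hp
  refine ⟨(perm_mem_autK_bd e p.1).mp h1, (perm_mem_autK_bd e p.2).mp h2,
    Finset.image_subset_image h3, ?_⟩
  show (p.2.image ⇑e).card = (p.1.image ⇑e).card + 1
  rw [Finset.card_image_of_injective _ e.injective,
    Finset.card_image_of_injective _ e.injective]; exact h4

lemma indVert_comp (e f : Fin (n+1) → Fin (n+1)) (p) :
    indVert e (indVert f p) = indVert (e ∘ f) p := by
  simp [indVert, Finset.image_image]

lemma indVert_inv (e : Equiv.Perm (Fin (n+1))) (p) : indVert ⇑e⁻¹ (indVert ⇑e p) = p := by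
  rw [indVert_comp]
  have : ⇑e⁻¹ ∘ ⇑e = id := by ext x; simp
  rw [this]; simp [indVert]

lemma indVert_inv' (e : Equiv.Perm (Fin (n+1))) (p) : indVert ⇑e (indVert ⇑e⁻¹ p) = p := by
  rw [indVert_comp]
  have : ⇑e ∘ ⇑e⁻¹ = id := by ext x; simp
  rw [this]; simp [indVert]

end MorseAux
namespace MorseAux
open Finset Equiv

variable {n : ℕ}

lemma ind_GVF (e : Equiv.Perm (Fin (n+1))) {W : Set (Finset (Fin (n+1)) × Finset (Fin (n+1)))}
    (h : IsGVF (bdSimplex n) W) : IsGVF (bdSimplex n) (indVert ⇑e '' W) := by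
  obtain ⟨⟨h1, h2⟩, h3⟩ := h
  have himg : Function.Injective (Finset.image (⇑e) : Finset (Fin (n+1)) → Finset (Fin (n+1))) :=
    Finset.image_injective e.injective
  constructor
  · constructor
    · rintro p ⟨q, hq, rfl⟩
      exact prim_ind (h1 q hq)
    · rintro p ⟨q, hq, rfl⟩ p' ⟨q', hq', rfl⟩ hne
      have hqq : q ≠ q' := by rintro rfl; exact hne rfl
      obtain ⟨d1, d2, d3, d4⟩ := h2 q hq q' hq' hqq
      simp only [indVert]
      exact ⟨fun hc => d1 (himg hc), fun hc => d2 (himg hc),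
        fun hc => d3 (himg hc), fun hc => d4 (himg hc)⟩
  · rintro ⟨k, α, β, hk, hmem, hstep, hcl⟩
    apply h3
    refine ⟨k, fun i => (α i).image ⇑e⁻¹, fun i => (β i).image ⇑e⁻¹, hk, ?_, ?_, ?_⟩
    · intro i hi
      obtain ⟨q, hq, hfe⟩ := hmem i hi
      have h' := congrArg (indVert ⇑e⁻¹) hfe
      rw [indVert_inv] at h'
      have : indVert ⇑e⁻¹ (α i, β i) ∈ W := h' ▸ hq
      exact this
    · intro i hi
      obtain ⟨s1, s2, s3⟩ := hstep i hi
      refine ⟨Finset.image_subset_image s1, ?_, ?_⟩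
      · show ((β i).image ⇑e⁻¹).card = ((α (i+1)).image ⇑e⁻¹).card + 1
        rw [Finset.card_image_of_injective _ e⁻¹.injective,
          Finset.card_image_of_injective _ e⁻¹.injective]; exact s2
      · intro hc
        exact s3 (Finset.image_injective e⁻¹.injective hc)
    · show (α k).image ⇑e⁻¹ = (α 0).image ⇑e⁻¹
      rw [hcl]

lemma cmap_GVF {W : Set (Finset (Fin (n+1)) × Finset (Fin (n+1)))}
    (h : IsGVF (bdSimplex n) W) : IsGVF (bdSimplex n) (cmap '' W) := by
  obtain ⟨⟨h1, h2⟩, h3⟩ := h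
  have hcompl : Function.Injective (compl : Finset (Fin (n+1)) → Finset (Fin (n+1))) :=
    compl_injective
  have hPrim : ∀ p ∈ cmap '' W, IsPrimitive (bdSimplex n) p := by
    rintro p ⟨q, hq, rfl⟩
    exact prim_cmap (h1 q hq)
  have hdvf : ∀ p ∈ cmap '' W, ∀ q ∈ cmap '' W, p ≠ q →
      p.1 ≠ q.1 ∧ p.1 ≠ q.2 ∧ p.2 ≠ q.1 ∧ p.2 ≠ q.2 := by
    rintro p ⟨q, hq, rfl⟩ p' ⟨q', hq', rfl⟩ hne
    have hqq : q ≠ q' := by rintro rfl; exact hne rfl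
    obtain ⟨d1, d2, d3, d4⟩ := h2 q hq q' hq' hqq
    simp only [cmap]
    exact ⟨fun hc => d4 (hcompl hc), fun hc => d3 (hcompl hc),
      fun hc => d2 (hcompl hc), fun hc => d1 (hcompl hc)⟩
  refine ⟨⟨hPrim, hdvf⟩, ?_⟩
  rintro ⟨k, α, β, hk, hmem, hstep, hcl⟩
  rcases Nat.lt_or_ge k 2 with hk1 | hk2
  · have hkeq : k = 1 := by omega
    subst hkeq
    exact (hstep 0 (by omega)).2.2 hcl
  apply h3
  have hprim : ∀ j, j < k → α j ⊆ β j ∧ (β j).card = (α j).card + 1 := by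
    intro j hj
    obtain ⟨-, -, p3, p4⟩ := hPrim _ (hmem j hj)
    exact ⟨p3, p4⟩
  have hbne : ∀ j j', j < k → j' < k → α j ≠ α j' → β j ≠ β j' := by
    intro j j' hj hj' hane hbeq
    have hne2 : (α j, β j) ≠ (α j', β j') := by
      intro hc; exact hane (congrArg Prod.fst hc)
    obtain ⟨-, -, -, d4⟩ := hdvf _ (hmem j hj) _ (hmem j' hj') hne2
    exact d4 hbeq
  have hcardle : ∀ s : Finset (Fin (n+1)), s.card ≤ n + 1 := by
    intro s
    have := Finset.card_le_univ s; simpa using this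
  refine ⟨k, fun i => if i < k then (β (k-1-i))ᶜ else (β (k-1))ᶜ,
    fun i => (α (k-1-i))ᶜ, by omega, ?_, ?_, ?_⟩
  · intro i hi
    simp only [if_pos hi]
    obtain ⟨q, hq, hfe⟩ := hmem (k-1-i) (by omega)
    have h' := congrArg cmap hfe
    rw [cmap_cmap] at h'
    have : cmap (α (k-1-i), β (k-1-i)) ∈ W := h' ▸ hq
    exact this
  · intro i hi
    rcases Nat.lt_or_ge (i+1) k with hik | hik
    · -- i + 1 < k
      simp only [if_pos hik, if_pos hi]
      have j1 : k - 1 - (i+1) + 1 = k - 1 - i := by omega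
      have hj : k - 1 - (i+1) < k := by omega
      obtain ⟨s1, s2, s3⟩ := hstep (k-1-(i+1)) hj
      rw [j1] at s1 s2 s3
      refine ⟨Finset.compl_subset_compl.mpr s1, ?_, ?_⟩
      · rw [card_compl_bd, card_compl_bd]
        have := (hprim (k-1-i) (by omega)).2
        have := hcardle (α (k-1-i))
        have := hcardle (β (k-1-(i+1)))
        omega
      · intro hc
        exact hbne (k-1-(i+1)) (k-1-i) hj (by omega) (Ne.symm s3) (hcompl hc)
    · -- i + 1 = k
      have hieq : i = k - 1 := by omega
      subst hieq
      have hik' : ¬ (k - 1 + 1 < k) := by omega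
      simp only [if_neg hik', if_pos (show k - 1 < k by omega), Nat.sub_self]
      obtain ⟨s1, s2, s3⟩ := hstep (k-1) (by omega)
      have hek : k - 1 + 1 = k := by omega
      rw [hek, hcl] at s1 s2 s3
      refine ⟨Finset.compl_subset_compl.mpr s1, ?_, ?_⟩
      · rw [card_compl_bd, card_compl_bd]
        have := hcardle (α 0)
        have := hcardle (β (k-1))
        omega
      · intro hc
        exact hbne (k-1) 0 (by omega) (by omega) (Ne.symm s3) (hcompl hc)
  · have hnk : ¬ (k < k) := by omega
    simp only [if_neg hnk, if_pos (show 0 < k by omega), Nat.sub_zero]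

end MorseAux
namespace MorseAux
open Finset Equiv

variable {n : ℕ}

/-- The underlying set of pairs of a finset of Morse vertices. -/
def us (s : Finset (MVert (bdSimplex n))) : Set (Finset (Fin (n+1)) × Finset (Fin (n+1))) :=
  {p | ∃ x ∈ s, (x : MVert (bdSimplex n)).val = p}

lemma mem_morse_iff {s : Finset (MVert (bdSimplex n))} :
    s ∈ (morse (bdSimplex n)).faces ↔ s.Nonempty ∧ IsGVF (bdSimplex n) (us s) := Iff.rfl

/-- image of the underlying set under a val-compatible map -/
lemma us_image (E : Equiv.Perm (MVert (bdSimplex n)))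
    (m : Finset (Fin (n+1)) × Finset (Fin (n+1)) → Finset (Fin (n+1)) × Finset (Fin (n+1)))
    (hm : ∀ x : MVert (bdSimplex n), (E x).val = m x.val)
    (s : Finset (MVert (bdSimplex n))) : us (s.image E) = m '' us s := by
  ext p
  constructor
  · rintro ⟨x, hx, rfl⟩
    obtain ⟨y, hy, rfl⟩ := Finset.mem_image.mp hx
    exact ⟨y.val, ⟨y, hy, rfl⟩, (hm y).symm⟩
  · rintro ⟨q, ⟨y, hy, rfl⟩, rfl⟩
    exact ⟨E y, Finset.mem_image_of_mem E hy, hm y⟩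

lemma mvext {p q : MVert (bdSimplex n)} (h : p.val = q.val) : p = q := Subtype.ext h

/-- The ghost permutation. -/
def Pm : Equiv.Perm (MVert (bdSimplex n)) :=
  Function.Involutive.toPerm (fun x => ⟨cmap x.val, prim_cmap x.2⟩)
    (fun x => mvext (cmap_cmap x.val))

lemma Pm_val (x : MVert (bdSimplex n)) : ((Pm x : MVert (bdSimplex n))).val = cmap x.val := rfl

lemma Pm_invol : ∀ x : MVert (bdSimplex n), Pm (Pm x) = x :=
  fun x => mvext (cmap_cmap x.val)

lemma Pm_sq : (Pm (n := n)) * Pm = 1 := Equiv.ext Pm_invol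

lemma Pm_mem : (Pm (n := n)) ∈ autK (morse (bdSimplex n)) := by
  have key : ∀ s : Finset (MVert (bdSimplex n)),
      s ∈ (morse (bdSimplex n)).faces → s.image Pm ∈ (morse (bdSimplex n)).faces := by
    intro s hs
    rw [mem_morse_iff] at hs ⊢
    refine ⟨hs.1.image Pm, ?_⟩
    rw [us_image Pm cmap Pm_val]
    exact cmap_GVF hs.2
  intro s
  constructor
  · exact key s
  · intro hs
    have := key _ hs
    rwa [Finset.image_image, show (⇑(Pm (n := n)) ∘ ⇑(Pm (n := n))) = id by
      ext x : 1; exact Pm_invol x, Finset.image_id] at this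

/-- the induced permutation of Morse vertices from a vertex permutation -/
def Fe (e : Equiv.Perm (Fin (n+1))) : Equiv.Perm (MVert (bdSimplex n)) where
  toFun x := ⟨indVert ⇑e x.val, prim_ind x.2⟩
  invFun x := ⟨indVert ⇑e⁻¹ x.val, prim_ind x.2⟩
  left_inv x := Subtype.ext (indVert_inv e x.val)
  right_inv x := Subtype.ext (indVert_inv' e x.val)

lemma Fe_val (e : Equiv.Perm (Fin (n+1))) (x : MVert (bdSimplex n)) :
    (Fe e x).val = indVert ⇑e x.val := rfl

lemma Fe_mem (e : Equiv.Perm (Fin (n+1))) : Fe e ∈ autK (morse (bdSimplex n)) := by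
  have key : ∀ (f : Equiv.Perm (Fin (n+1))) (s : Finset (MVert (bdSimplex n))),
      s ∈ (morse (bdSimplex n)).faces → s.image (Fe f) ∈ (morse (bdSimplex n)).faces := by
    intro f s hs
    rw [mem_morse_iff] at hs ⊢
    refine ⟨hs.1.image _, ?_⟩
    rw [us_image (Fe f) (indVert ⇑f) (Fe_val f)]
    exact ind_GVF f hs.2
  intro s
  constructor
  · exact key e s
  · intro hs
    have := key e⁻¹ _ hs
    rwa [Finset.image_image, show (⇑(Fe (n := n) e⁻¹) ∘ ⇑(Fe (n := n) e)) = id by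
      ext x : 1
      show Fe e⁻¹ (Fe e x) = x
      exact mvext (by rw [Fe_val, Fe_val]; exact indVert_inv e x.val), Finset.image_id] at this

lemma Fe_mul (e f : Equiv.Perm (Fin (n+1))) : Fe (e * f) = Fe e * Fe f := by
  apply Equiv.ext
  intro x
  apply mvext
  show indVert ⇑(e * f) x.val = indVert ⇑e (indVert ⇑f x.val)
  rw [indVert_comp]
  rfl

lemma Fe_one : Fe (n := n) 1 = 1 := by
  apply Equiv.ext
  intro x
  apply mvext
  show indVert ⇑(1 : Equiv.Perm (Fin (n+1))) x.val = x.val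
  simp [indVert]

lemma Fe_Pm_comm (e : Equiv.Perm (Fin (n+1))) : Fe e * Pm = Pm * Fe e := by
  have himage_compl : ∀ s : Finset (Fin (n+1)), sᶜ.image ⇑e = (s.image ⇑e)ᶜ := by
    intro s
    ext b
    simp only [Finset.mem_image, Finset.mem_compl]
    constructor
    · rintro ⟨a, ha, rfl⟩
      rintro ⟨a', ha', haa⟩
      exact ha ((e.injective haa) ▸ ha')
    · intro hb
      exact ⟨e⁻¹ b, fun hc => hb ⟨e⁻¹ b, hc, by simp⟩, by simp⟩
  apply Equiv.ext
  intro x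
  apply mvext
  show indVert ⇑e (cmap x.val) = cmap (indVert ⇑e x.val)
  show ((x.val.2ᶜ).image ⇑e, (x.val.1ᶜ).image ⇑e)
      = (((x.val.2).image ⇑e)ᶜ, ((x.val.1).image ⇑e)ᶜ)
  rw [himage_compl, himage_compl]

end MorseAux
namespace MorseAux
open Finset Equiv

variable {n : ℕ}

/-- the candidate homomorphism -/
def phi0 : autK (bdSimplex n) × Multiplicative (ZMod 2) →* autK (morse (bdSimplex n)) where
  toFun fi := ⟨Fe fi.1.val * Pm ^ (Multiplicative.toAdd fi.2).val,
    mul_mem (Fe_mem _) (pow_mem Pm_mem _)⟩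
  map_one' := by
    apply Subtype.ext
    show Fe 1 * Pm ^ (Multiplicative.toAdd (1 : Multiplicative (ZMod 2))).val = 1
    rw [toAdd_one, ZMod.val_zero, pow_zero, Fe_one, mul_one]
  map_mul' := by
    rintro ⟨f, i⟩ ⟨g, j⟩
    apply Subtype.ext
    show Fe (f.val * g.val) * Pm ^ (Multiplicative.toAdd (i * j)).val
      = (Fe f.val * Pm ^ (Multiplicative.toAdd i).val)
        * (Fe g.val * Pm ^ (Multiplicative.toAdd j).val)
    set a := (Multiplicative.toAdd i).val
    set b := (Multiplicative.toAdd j).val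
    have h2 : (Pm (n := n)) ^ 2 = 1 := by rw [pow_two]; exact Pm_sq
    have hmod : (Pm (n := n)) ^ (Multiplicative.toAdd (i * j)).val = Pm ^ (a + b) := by
      rw [toAdd_mul, ZMod.val_add]
      exact (pow_eq_pow_mod _ h2).symm
    rw [hmod, Fe_mul, pow_add]
    have hcg : Fe (n := n) g.val * Pm ^ a = Pm ^ a * Fe g.val :=
      ((show Commute (Fe (n := n) g.val) Pm from Fe_Pm_comm g.val).pow_right a).eq
    calc Fe f.val * Fe g.val * (Pm ^ a * Pm ^ b)
        = Fe f.val * (Fe g.val * Pm ^ a) * Pm ^ b := by group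
      _ = Fe f.val * (Pm ^ a * Fe g.val) * Pm ^ b := by rw [hcg]
      _ = Fe f.val * Pm ^ a * (Fe g.val * Pm ^ b) := by group

/-- elementary vector ({a}, {a,b}) -/
def pvec (hn : 2 ≤ n) (a b : Fin (n+1)) (hab : a ≠ b) : MVert (bdSimplex n) :=
  ⟨({a}, {a, b}), by
    have hcard : ({a, b} : Finset (Fin (n+1))).card = 2 := by
      rw [Finset.card_insert_of_notMem (by simpa using hab), Finset.card_singleton]
    have h1 : ({a} : Finset (Fin (n+1))) ∈ (bdSimplex n).faces :=
      mem_bd_card.mpr (by rw [Finset.card_singleton]; omega)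
    have h2 : ({a, b} : Finset (Fin (n+1))) ∈ (bdSimplex n).faces :=
      mem_bd_card.mpr (by rw [hcard]; omega)
    refine ⟨h1, h2, by simp, ?_⟩
    show ({a, b} : Finset (Fin (n+1))).card = ({a} : Finset (Fin (n+1))).card + 1
    rw [hcard, Finset.card_singleton]⟩

lemma nontrivial_fin (hn : 2 ≤ n) : Nontrivial (Fin (n+1)) :=
  ⟨⟨⟨0, by omega⟩, ⟨1, by omega⟩, fun h => by simpa using congrArg Fin.val h⟩⟩

lemma phi0_inj (hn : 2 ≤ n) : Function.Injective (phi0 (n := n)) := by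
  rw [injective_iff_map_eq_one]
  rintro ⟨f, i⟩ hfi
  have hval : Fe f.val * Pm ^ (Multiplicative.toAdd i).val = 1 := congrArg Subtype.val hfi
  have hvlt : (Multiplicative.toAdd i).val < 2 := ZMod.val_lt _
  have hnt : Nontrivial (Fin (n+1)) := nontrivial_fin hn
  rcases Nat.lt_or_ge (Multiplicative.toAdd i).val 1 with hv | hv
  · -- exponent 0
    have h0 : (Multiplicative.toAdd i).val = 0 := by omega
    rw [h0, pow_zero, mul_one] at hval
    have hi : i = 1 := by
      have h00 : Multiplicative.toAdd i = 0 := (ZMod.val_eq_zero _).mp h0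
      exact Multiplicative.toAdd.injective (by rw [h00, toAdd_one])
    have hf : f = 1 := by
      apply Subtype.ext
      apply Equiv.ext
      intro a
      obtain ⟨b, hb⟩ := exists_ne a
      have := congrArg (fun E : Equiv.Perm (MVert (bdSimplex n)) => (E (pvec hn a b (Ne.symm hb))).val.1) hval
      simp only [Perm.one_apply] at this
      rw [Fe_val] at this
      have h1 : ({a} : Finset (Fin (n+1))).image ⇑f.val = {a} := this
      rw [Finset.image_singleton] at h1
      exact Finset.singleton_injective h1
    rw [hf, hi]; rfl
  · -- exponent 1
    exfalso
    have h1 : (Multiplicative.toAdd i).val = 1 := by omega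
    rw [h1, pow_one] at hval
    obtain ⟨a, b, hab⟩ := exists_pair_ne (Fin (n+1))
    -- we need two distinct elements different from a
    have hcompl : 1 < ({a} : Finset (Fin (n+1)))ᶜ.card := by
      rw [card_compl_bd, Finset.card_singleton]; omega
    obtain ⟨c, hc, d, hd, hcd⟩ := Finset.one_lt_card.mp hcompl
    rw [Finset.mem_compl, Finset.mem_singleton] at hc hd
    have key : ∀ e : Fin (n+1), e ≠ a → ({a, e} : Finset (Fin (n+1)))ᶜ = {f.val⁻¹ a} := by
      intro e he
      have := congrArg (fun E : Equiv.Perm (MVert (bdSimplex n)) => (E (pvec hn a e (Ne.symm he))).val.1) hval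
      simp only [Perm.one_apply, Perm.mul_apply] at this
      have h2 : (({a, e} : Finset (Fin (n+1)))ᶜ).image ⇑f.val = {a} := this
      have := congrArg (Finset.image ⇑f.val⁻¹) h2
      rw [Finset.image_image, Finset.image_singleton] at this
      rw [← this]
      have : ⇑f.val⁻¹ ∘ ⇑f.val = id := by ext x; simp
      rw [this, Finset.image_id]
    have hcdeq : ({a, c} : Finset (Fin (n+1))) = {a, d} := by
      have := (key c hc).trans (key d hd).symm
      exact compl_injective this
    have : d ∈ ({a, c} : Finset (Fin (n+1))) := by rw [hcdeq]; simp
    rcases Finset.mem_insert.mp this with h | h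
    · exact hd h
    · exact hcd (Finset.mem_singleton.mp h).symm

end MorseAux
namespace MorseAux
open Finset Equiv

variable {n : ℕ}

/-- `v` is a coordinate of the primitive vector `p`. -/
def cds (p : MVert (bdSimplex n)) (v : Finset (Fin (n+1))) : Prop :=
  v = p.val.1 ∨ v = p.val.2

lemma cds_face {p : MVert (bdSimplex n)} {v} (h : cds p v) : v ∈ (bdSimplex n).faces := by
  rcases h with h | h
  · rw [h]; exact p.2.1
  · rw [h]; exact p.2.2.1

lemma cds_fst (p : MVert (bdSimplex n)) : cds p p.val.1 := Or.inl rfl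
lemma cds_snd (p : MVert (bdSimplex n)) : cds p p.val.2 := Or.inr rfl

lemma cds_two {p : MVert (bdSimplex n)} {v w} (h1 : cds p v) (h2 : cds p w) (hvw : v ≠ w) :
    (p.val = (v, w) ∧ w.card = v.card + 1) ∨ (p.val = (w, v) ∧ v.card = w.card + 1) := by
  have hcard := p.2.2.2.2
  rcases h1 with h1 | h1 <;> rcases h2 with h2 | h2
  · exact absurd (h1.trans h2.symm) hvw
  · left
    refine ⟨Prod.ext h1.symm h2.symm, ?_⟩
    rw [h1, h2]; exact hcard
  · right
    refine ⟨Prod.ext h2.symm h1.symm, ?_⟩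
    rw [h1, h2]; exact hcard
  · exact absurd (h1.trans h2.symm) hvw

lemma cds_card {p : MVert (bdSimplex n)} {v w} (h1 : cds p v) (h2 : cds p w) (hvw : v ≠ w) :
    w.card = v.card + 1 ∨ v.card = w.card + 1 := by
  rcases cds_two h1 h2 hvw with ⟨-, h⟩ | ⟨-, h⟩
  · exact Or.inl h
  · exact Or.inr h

lemma val_eq_of_two_shared {p q : MVert (bdSimplex n)} {v w}
    (hpv : cds p v) (hqv : cds q v) (hpw : cds p w) (hqw : cds q w) (hvw : v ≠ w) : p = q := by
  apply mvext
  rcases cds_two hpv hpw hvw with ⟨h1, c1⟩ | ⟨h1, c1⟩ <;>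
    rcases cds_two hqv hqw hvw with ⟨h2, c2⟩ | ⟨h2, c2⟩
  · rw [h1, h2]
  · omega
  · omega
  · rw [h1, h2]

lemma shared_unique {p q : MVert (bdSimplex n)} (hpq : p ≠ q) {v w}
    (hpv : cds p v) (hqv : cds q v) (hpw : cds p w) (hqw : cds q w) : v = w := by
  by_contra hvw
  exact hpq (val_eq_of_two_shared hpv hqv hpw hqw hvw)

/-- Two distinct primitive vectors forming a closed path must share a simplex:
the key "no 2-cycles among disjoint pairs" computation. -/
lemma two_cycle_contra {P Q : Finset (Fin (n+1)) × Finset (Fin (n+1))}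
    (hP : IsPrimitive (bdSimplex n) P) (hQ : IsPrimitive (bdSimplex n) Q)
    (h1 : Q.1 ⊆ P.2) (h2 : P.1 ⊆ Q.2)
    (hc1 : P.2.card = Q.1.card + 1)
    (hne1 : P.1 ≠ Q.1) (hne2 : P.2 ≠ Q.2) : False := by
  have hPc := hP.2.2.2
  have hQc := hQ.2.2.2
  have hsub1 : P.1 ∪ Q.1 ⊆ P.2 := Finset.union_subset hP.2.2.1 h1
  have hsub2 : P.1 ∪ Q.1 ⊆ Q.2 := Finset.union_subset h2 hQ.2.2.1
  have hss : P.1 ⊂ P.1 ∪ Q.1 := by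
    refine Finset.ssubset_iff_subset_ne.mpr ⟨Finset.subset_union_left, fun hc => hne1 ?_⟩
    have hq1 : Q.1 ⊆ P.1 := by rw [hc]; exact Finset.subset_union_right
    exact (Finset.eq_of_subset_of_card_le hq1 (by omega)).symm
  have hcard : P.1.card < (P.1 ∪ Q.1).card := Finset.card_lt_card hss
  have e1 : P.1 ∪ Q.1 = P.2 := Finset.eq_of_subset_of_card_le hsub1 (by omega)
  have e2 : P.1 ∪ Q.1 = Q.2 := Finset.eq_of_subset_of_card_le hsub2 (by omega)
  exact hne2 (e1.symm.trans e2)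

lemma us_pair (p q : MVert (bdSimplex n)) :
    us ({p, q} : Finset (MVert (bdSimplex n))) = {p.val, q.val} := by
  ext r
  constructor
  · rintro ⟨x, hx, rfl⟩
    rcases Finset.mem_insert.mp hx with h | h
    · left; rw [h]
    · right; rw [Finset.mem_singleton.mp h]; rfl
  · rintro (h | h)
    · exact ⟨p, Finset.mem_insert_self _ _, h.symm⟩
    · exact ⟨q, Finset.mem_insert.mpr (Or.inr (Finset.mem_singleton_self q)), h.symm⟩

lemma pair_face_iff {p q : MVert (bdSimplex n)} (hpq : p ≠ q) :
    ({p, q} : Finset (MVert (bdSimplex n))) ∈ (morse (bdSimplex n)).faces ↔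
      (p.val.1 ≠ q.val.1 ∧ p.val.1 ≠ q.val.2 ∧ p.val.2 ≠ q.val.1 ∧ p.val.2 ≠ q.val.2) := by
  have hvals : p.val ≠ q.val := fun h => hpq (mvext h)
  rw [mem_morse_iff, us_pair]
  constructor
  · rintro ⟨-, ⟨-, hdvf⟩, -⟩
    exact hdvf p.val (Or.inl rfl) q.val (Or.inr rfl) hvals
  · rintro ⟨d1, d2, d3, d4⟩
    refine ⟨⟨p, Finset.mem_insert_self _ _⟩, ⟨?_, ?_⟩, ?_⟩
    · rintro r (rfl | rfl)
      · exact p.2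
      · exact q.2
    · rintro r (rfl | rfl) r' (rfl | rfl) hne
      · exact absurd rfl hne
      · exact ⟨d1, d2, d3, d4⟩
      · exact ⟨d1.symm, d3.symm, d2.symm, d4.symm⟩
      · exact absurd rfl hne
    · rintro ⟨k, α, β, hk, hmem, hstep, hcl⟩
      rcases Nat.lt_or_ge k 2 with hk1 | hk2
      · have : k = 1 := by omega
        subst this
        exact (hstep 0 (by omega)).2.2 hcl
      · have hm0 := hmem 0 (by omega)
        have hm1 := hmem 1 (by omega)
        simp only [Set.mem_insert_iff, Set.mem_singleton_iff] at hm0 hm1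
        obtain ⟨s01, s02, s03⟩ := hstep 0 (by omega)
        obtain ⟨s11, s12, s13⟩ := hstep 1 (by omega)
        have hα2 : α 2 = α 0 := by
          rcases Nat.lt_or_ge 2 k with h2k | h2k
          · -- α 2 is a first coordinate distinct from α 1
            have hm2 := hmem 2 h2k
            simp only [Set.mem_insert_iff, Set.mem_singleton_iff] at hm2
            rcases hm0 with h0 | h0 <;> rcases hm1 with h1 | h1 <;> rcases hm2 with h2 | h2
            · exact absurd ((congrArg Prod.fst h1).trans (congrArg Prod.fst h0).symm) s03
            · exact absurd ((congrArg Prod.fst h1).trans (congrArg Prod.fst h0).symm) s03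
            · exact (congrArg Prod.fst h2).trans (congrArg Prod.fst h0).symm
            · exact absurd ((congrArg Prod.fst h2).trans (congrArg Prod.fst h1).symm) s13
            · exact absurd ((congrArg Prod.fst h2).trans (congrArg Prod.fst h1).symm) s13
            · exact (congrArg Prod.fst h2).trans (congrArg Prod.fst h0).symm
            · exact absurd ((congrArg Prod.fst h1).trans (congrArg Prod.fst h0).symm) s03
            · exact absurd ((congrArg Prod.fst h1).trans (congrArg Prod.fst h0).symm) s03
          · have : k = 2 := by omega
            rw [← this]; exact hcl
        have s11' : α 0 ⊆ β 1 := by rw [← hα2]; exact s11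
        have s12' : (β 1).card = (α 0).card + 1 := by rw [← hα2]; exact s12
        rcases hm0 with h0 | h0 <;> rcases hm1 with h1 | h1
        · exact s03 ((congrArg Prod.fst h1).trans (congrArg Prod.fst h0).symm)
        · -- (α0,β0) = p.val, (α1,β1) = q.val
          have ea0 : α 0 = p.val.1 := congrArg Prod.fst h0
          have eb0 : β 0 = p.val.2 := congrArg Prod.snd h0
          have ea1 : α 1 = q.val.1 := congrArg Prod.fst h1
          have eb1 : β 1 = q.val.2 := congrArg Prod.snd h1
          refine two_cycle_contra p.2 q.2 ?_ ?_ ?_ d1 d4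
          · rw [← ea1, ← eb0]; exact s01
          · rw [← ea0, ← eb1]; exact s11'
          · rw [← eb0, ← ea1]; exact s02
        · have ea0 : α 0 = q.val.1 := congrArg Prod.fst h0
          have eb0 : β 0 = q.val.2 := congrArg Prod.snd h0
          have ea1 : α 1 = p.val.1 := congrArg Prod.fst h1
          have eb1 : β 1 = p.val.2 := congrArg Prod.snd h1
          refine two_cycle_contra q.2 p.2 ?_ ?_ ?_ (Ne.symm d1) (Ne.symm d4)
          · rw [← ea1, ← eb0]; exact s01
          · rw [← ea0, ← eb1]; exact s11'
          · rw [← eb0, ← ea1]; exact s02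
        · exact s03 ((congrArg Prod.fst h1).trans (congrArg Prod.fst h0).symm)

def Share (p q : MVert (bdSimplex n)) : Prop :=
  p ≠ q ∧ ∃ v, cds p v ∧ cds q v

lemma share_iff_not_face {p q : MVert (bdSimplex n)} (hpq : p ≠ q) :
    Share p q ↔ ¬ (({p, q} : Finset (MVert (bdSimplex n))) ∈ (morse (bdSimplex n)).faces) := by
  rw [pair_face_iff hpq]
  constructor
  · rintro ⟨-, v, hp, hq⟩ ⟨d1, d2, d3, d4⟩
    rcases hp with rfl | rfl <;> rcases hq with h | h
    · exact d1 h
    · exact d2 h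
    · exact d3 h
    · exact d4 h
  · intro h
    refine ⟨hpq, ?_⟩
    by_contra hc
    push_neg at hc
    refine h ⟨?_, ?_, ?_, ?_⟩
    · intro he; exact hc q.val.1 (Or.inl he.symm) (Or.inl rfl)
    · intro he; exact hc q.val.2 (Or.inl he.symm) (Or.inr rfl)
    · intro he; exact hc q.val.1 (Or.inr he.symm) (Or.inl rfl)
    · intro he; exact hc q.val.2 (Or.inr he.symm) (Or.inr rfl)

lemma share_pres {P₀ : Equiv.Perm (MVert (bdSimplex n))} (hP₀ : P₀ ∈ autK (morse (bdSimplex n)))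
    (p q : MVert (bdSimplex n)) : Share (P₀ p) (P₀ q) ↔ Share p q := by
  by_cases hpq : p = q
  · subst hpq
    constructor
    · rintro ⟨h, -⟩; exact absurd rfl h
    · rintro ⟨h, -⟩; exact absurd rfl h
  · have hpq' : P₀ p ≠ P₀ q := fun h => hpq (P₀.injective h)
    rw [share_iff_not_face hpq, share_iff_not_face hpq']
    have himg : ({p, q} : Finset (MVert (bdSimplex n))).image ⇑P₀ = {P₀ p, P₀ q} := by
      rw [Finset.image_insert, Finset.image_singleton]
    rw [← himg]
    exact not_congr (hP₀ {p, q}).symm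

lemma triangle {p q r : MVert (bdSimplex n)} (hpq : p ≠ q)
    (h1 : Share p q) (h2 : Share p r) (h3 : Share q r) :
    ∃ v, cds p v ∧ cds q v ∧ cds r v := by
  obtain ⟨-, v, hpv, hqv⟩ := h1
  by_cases hrv : cds r v
  · exact ⟨v, hpv, hqv, hrv⟩
  exfalso
  obtain ⟨-, v1, hpv1, hrv1⟩ := h2
  obtain ⟨-, v2, hqv2, hrv2⟩ := h3
  have hv1v : v1 ≠ v := fun h => hrv (h ▸ hrv1)
  have hv2v : v2 ≠ v := fun h => hrv (h ▸ hrv2)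
  have hv12 : v1 ≠ v2 := by
    intro h
    subst h
    exact hv1v (shared_unique hpq hpv1 hqv2 hpv hqv)
  rcases cds_card hpv hpv1 hv1v.symm with c1 | c1 <;>
    rcases cds_card hqv hqv2 hv2v.symm with c2 | c2 <;>
      rcases cds_card hrv1 hrv2 hv12 with c3 | c3 <;> omega

/-- two distinct vectors through any face of `∂Δⁿ` -/
lemma star_two (hn : 2 ≤ n) {v : Finset (Fin (n+1))} (hv : v ∈ (bdSimplex n).faces) :
    ∃ p q : MVert (bdSimplex n), p ≠ q ∧ cds p v ∧ cds q v := by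
  obtain ⟨hc1, hc2⟩ := mem_bd_card.mp hv
  rcases Nat.lt_or_ge v.card n with hcase | hcase
  · -- at least two cofaces
    have h2 : 1 < vᶜ.card := by rw [card_compl_bd]; omega
    obtain ⟨x, hx, y, hy, hxy⟩ := Finset.one_lt_card.mp h2
    rw [Finset.mem_compl] at hx hy
    have hprim : ∀ z : Fin (n+1), z ∉ v → IsPrimitive (bdSimplex n) (v, insert z v) := by
      intro z hz
      have hci : (insert z v).card = v.card + 1 := Finset.card_insert_of_notMem hz
      refine ⟨hv, mem_bd_card.mpr ?_, Finset.subset_insert _ _, ?_⟩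
      · rw [hci]; omega
      · show (insert z v).card = v.card + 1
        exact hci
    refine ⟨⟨(v, insert x v), hprim x hx⟩, ⟨(v, insert y v), hprim y hy⟩, ?_, Or.inl rfl, Or.inl rfl⟩
    intro h
    have := congrArg (fun z : MVert (bdSimplex n) => z.val.2) h
    simp only at this
    have hxm : x ∈ insert y v := this ▸ Finset.mem_insert_self x v
    rcases Finset.mem_insert.mp hxm with h' | h'
    · exact hxy h'
    · exact hx h'
  · -- v.card = n ≥ 2 : at least two facets
    have h2 : 1 < v.card := by omega
    obtain ⟨x, hx, y, hy, hxy⟩ := Finset.one_lt_card.mp h2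
    have hprim : ∀ z : Fin (n+1), z ∈ v → IsPrimitive (bdSimplex n) (v.erase z, v) := by
      intro z hz
      have hce : (v.erase z).card = v.card - 1 := Finset.card_erase_of_mem hz
      refine ⟨mem_bd_card.mpr ?_, hv, Finset.erase_subset _ _, ?_⟩
      · rw [hce]; omega
      · show v.card = (v.erase z).card + 1
        rw [hce]; omega
    refine ⟨⟨(v.erase x, v), hprim x hx⟩, ⟨(v.erase y, v), hprim y hy⟩, ?_, Or.inr rfl, Or.inr rfl⟩
    intro h
    have := congrArg (fun z : MVert (bdSimplex n) => z.val.1) h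
    simp only at this
    have hym : y ∈ v.erase x := Finset.mem_erase.mpr ⟨fun h' => hxy h'.symm, hy⟩
    rw [this] at hym
    exact (Finset.mem_erase.mp hym).1 rfl

open Classical in
/-- the induced map on simplices -/
noncomputable def gfun (P₀ : Equiv.Perm (MVert (bdSimplex n))) (v : Finset (Fin (n+1))) :
    Finset (Fin (n+1)) :=
  if h : ∃ w, w ∈ (bdSimplex n).faces ∧ ∀ r : MVert (bdSimplex n), cds r v → cds (P₀ r) w
  then h.choose else ∅

lemma gfun_exists (hn : 2 ≤ n) {P₀ : Equiv.Perm (MVert (bdSimplex n))}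
    (hP₀ : P₀ ∈ autK (morse (bdSimplex n))) {v} (hv : v ∈ (bdSimplex n).faces) :
    ∃ w, w ∈ (bdSimplex n).faces ∧ ∀ r : MVert (bdSimplex n), cds r v → cds (P₀ r) w := by
  obtain ⟨p, q, hpq, hp, hq⟩ := star_two hn hv
  have hsh : Share (P₀ p) (P₀ q) := (share_pres hP₀ p q).mpr ⟨hpq, v, hp, hq⟩
  obtain ⟨hne', w, hw1, hw2⟩ := hsh
  refine ⟨w, cds_face hw1, ?_⟩
  intro r hr
  by_cases hrp : r = p
  · rw [hrp]; exact hw1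
  by_cases hrq : r = q
  · rw [hrq]; exact hw2
  obtain ⟨u, hu1, hu2, hu3⟩ := triangle hne'
    ((share_pres hP₀ p q).mpr ⟨hpq, v, hp, hq⟩)
    ((share_pres hP₀ p r).mpr ⟨Ne.symm hrp, v, hp, hr⟩)
    ((share_pres hP₀ q r).mpr ⟨Ne.symm hrq, v, hq, hr⟩)
  rwa [shared_unique hne' hu1 hu2 hw1 hw2] at hu3

lemma gfun_spec (hn : 2 ≤ n) {P₀ : Equiv.Perm (MVert (bdSimplex n))}
    (hP₀ : P₀ ∈ autK (morse (bdSimplex n))) {v} (hv : v ∈ (bdSimplex n).faces) :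
    gfun P₀ v ∈ (bdSimplex n).faces ∧
      ∀ r : MVert (bdSimplex n), cds r v → cds (P₀ r) (gfun P₀ v) := by
  have h := gfun_exists hn hP₀ hv
  rw [show gfun P₀ v = h.choose from dif_pos h]
  exact h.choose_spec

end MorseAux
namespace MorseAux
open Finset Equiv

variable {n : ℕ}

/-- Hasse adjacency on simplices. -/
def Adjb (v w : Finset (Fin (n+1))) : Prop :=
  (v ⊆ w ∧ w.card = v.card + 1) ∨ (w ⊆ v ∧ v.card = w.card + 1)

lemma adjb_symm {v w : Finset (Fin (n+1))} (h : Adjb v w) : Adjb w v := h.symm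

lemma adjb_ne {v w : Finset (Fin (n+1))} (h : Adjb v w) : v ≠ w := by
  rcases h with ⟨-, h⟩ | ⟨-, h⟩ <;> exact fun hc => by rw [hc] at h; omega

lemma adjb_iff_vector {v w : Finset (Fin (n+1))}
    (hv : v ∈ (bdSimplex n).faces) (hw : w ∈ (bdSimplex n).faces) :
    Adjb v w ↔ ∃ p : MVert (bdSimplex n), cds p v ∧ cds p w ∧ v ≠ w := by
  constructor
  · intro h
    rcases h with ⟨h1, h2⟩ | ⟨h1, h2⟩
    · exact ⟨⟨(v, w), hv, hw, h1, h2⟩, Or.inl rfl, Or.inr rfl,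
        fun hc => by rw [hc] at h2; omega⟩
    · exact ⟨⟨(w, v), hw, hv, h1, h2⟩, Or.inr rfl, Or.inl rfl,
        fun hc => by rw [hc] at h2; omega⟩
  · rintro ⟨p, h1, h2, hne⟩
    rcases cds_two h1 h2 hne with ⟨hp, hc⟩ | ⟨hp, hc⟩
    · left
      have := p.2.2.2.1
      rw [hp] at this
      exact ⟨this, hc⟩
    · right
      have := p.2.2.2.1
      rw [hp] at this
      exact ⟨this, hc⟩

variable {P₀ : Equiv.Perm (MVert (bdSimplex n))}

lemma gfun_left_inv (hn : 2 ≤ n) (hP₀ : P₀ ∈ autK (morse (bdSimplex n))) {v} (hv : v ∈ (bdSimplex n).faces) : gfun P₀⁻¹ (gfun P₀ v) = v := by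
  obtain ⟨p, q, hpq, hp, hq⟩ := star_two hn hv
  obtain ⟨hgf, hgs⟩ := gfun_spec hn hP₀ hv
  obtain ⟨hgf', hgs'⟩ := gfun_spec hn (inv_mem hP₀) hgf
  have h1 := hgs' (P₀ p) (hgs p hp)
  have h2 := hgs' (P₀ q) (hgs q hq)
  rw [show ∀ x, P₀⁻¹ (P₀ x) = x from fun x => P₀.symm_apply_apply x] at h1 h2
  exact shared_unique hpq h1 h2 hp hq

lemma gfun_face (hn : 2 ≤ n) (hP₀ : P₀ ∈ autK (morse (bdSimplex n))) {v} (hv : v ∈ (bdSimplex n).faces) : gfun P₀ v ∈ (bdSimplex n).faces :=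
  (gfun_spec hn hP₀ hv).1

lemma gfun_inj (hn : 2 ≤ n) (hP₀ : P₀ ∈ autK (morse (bdSimplex n))) {v w} (hv : v ∈ (bdSimplex n).faces) (hw : w ∈ (bdSimplex n).faces)
    (h : gfun P₀ v = gfun P₀ w) : v = w := by
  rw [← gfun_left_inv hn hP₀ hv, ← gfun_left_inv hn hP₀ hw, h]

lemma gfun_right_inv (hn : 2 ≤ n) (hP₀ : P₀ ∈ autK (morse (bdSimplex n))) {v} (hv : v ∈ (bdSimplex n).faces) : gfun P₀ (gfun P₀⁻¹ v) = v := by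
  have := gfun_left_inv hn (inv_mem hP₀) hv
  rwa [inv_inv] at this

lemma gfun_adj (hn : 2 ≤ n) (hP₀ : P₀ ∈ autK (morse (bdSimplex n))) {v w} (hv : v ∈ (bdSimplex n).faces) (hw : w ∈ (bdSimplex n).faces)
    (h : Adjb v w) : Adjb (gfun P₀ v) (gfun P₀ w) := by
  obtain ⟨p, h1, h2, hne⟩ := (adjb_iff_vector hv hw).mp h
  rw [adjb_iff_vector (gfun_face hn hP₀ hv) (gfun_face hn hP₀ hw)]
  exact ⟨P₀ p, (gfun_spec hn hP₀ hv).2 p h1, (gfun_spec hn hP₀ hw).2 p h2,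
    fun hc => hne (gfun_inj hn hP₀ hv hw hc)⟩

/-- the "exactly one common neighbour" relation -/
def Rrel (v w : Finset (Fin (n+1))) : Prop :=
  v ≠ w ∧ ∃! u, u ∈ (bdSimplex n).faces ∧ Adjb u v ∧ Adjb u w

lemma inter_card_le {v w : Finset (Fin (n+1))} (hne : v ≠ w) (hcc : v.card = w.card) :
    (v ∩ w).card + 1 ≤ v.card := by
  by_contra hc
  push_neg at hc
  have h1 : v ∩ w = v := Finset.eq_of_subset_of_card_le Finset.inter_subset_left (by omega)
  have h2 : v ∩ w = w := Finset.eq_of_subset_of_card_le Finset.inter_subset_right (by omega)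
  exact hne (h1.symm.trans h2)

lemma Rchar (hn : 2 ≤ n) {v w : Finset (Fin (n+1))}
    (hv : v ∈ (bdSimplex n).faces) (hw : w ∈ (bdSimplex n).faces) :
    Rrel v w ↔ (v ≠ w ∧ v.card = w.card ∧ (v.card = 1 ∨ v.card = n)) := by
  obtain ⟨hv1, hv2⟩ := mem_bd_card.mp hv
  obtain ⟨hw1, hw2⟩ := mem_bd_card.mp hw
  have hcui : (v ∪ w).card + (v ∩ w).card = v.card + w.card :=
    Finset.card_union_add_card_inter v w
  constructor
  · rintro ⟨hne, u, ⟨huf, huv, huw⟩, huniq⟩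
    obtain ⟨hu1, hu2⟩ := mem_bd_card.mp huf
    -- first : v and w have the same cardinality
    have hcc : v.card = w.card := by
      rcases huv with ⟨a1, a2⟩ | ⟨a1, a2⟩ <;> rcases huw with ⟨b1, b2⟩ | ⟨b1, b2⟩
      · omega
      · -- w ⊆ u ⊆ v : build a second common neighbour
        exfalso
        have hwv : w ⊆ v := b1.trans a1
        obtain ⟨x, hx⟩ : (v \ u).Nonempty := by
          rw [← Finset.card_pos, Finset.card_sdiff_of_subset a1]; omega
        rw [Finset.mem_sdiff] at hx
        have hxw : x ∉ w := fun hc => hx.2 (b1 hc)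
        have hu2card : (insert x w).card = w.card + 1 := Finset.card_insert_of_notMem hxw
        have hu2sub : insert x w ⊆ v := Finset.insert_subset hx.1 hwv
        have hu2f : insert x w ∈ (bdSimplex n).faces := by
          rw [mem_bd_card]
          have := Finset.card_le_card hu2sub
          omega
        have := huniq (insert x w) ⟨hu2f, Or.inl ⟨hu2sub, by omega⟩,
          Or.inr ⟨Finset.subset_insert _ _, by omega⟩⟩
        exact hx.2 (this ▸ Finset.mem_insert_self x w)
      · -- v ⊆ u ⊆ w : symmetric
        exfalso
        have hvw : v ⊆ w := a1.trans b1
        obtain ⟨x, hx⟩ : (w \ u).Nonempty := by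
          rw [← Finset.card_pos, Finset.card_sdiff_of_subset b1]; omega
        rw [Finset.mem_sdiff] at hx
        have hxv : x ∉ v := fun hc => hx.2 (a1 hc)
        have hu2card : (insert x v).card = v.card + 1 := Finset.card_insert_of_notMem hxv
        have hu2sub : insert x v ⊆ w := Finset.insert_subset hx.1 hvw
        have hu2f : insert x v ∈ (bdSimplex n).faces := by
          rw [mem_bd_card]
          have := Finset.card_le_card hu2sub
          omega
        have := huniq (insert x v) ⟨hu2f, Or.inr ⟨Finset.subset_insert _ _, by omega⟩,
          Or.inl ⟨hu2sub, by omega⟩⟩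
        exact hx.2 (this ▸ Finset.mem_insert_self x v)
      · omega
    refine ⟨hne, hcc, ?_⟩
    -- now show the level is extreme
    by_contra hcon
    push_neg at hcon
    obtain ⟨hk1, hkn⟩ := hcon
    have hk2 : 2 ≤ v.card := by omega
    have hkn1 : v.card ≤ n - 1 := by omega
    have hint : (v ∩ w).card + 1 ≤ v.card := inter_card_le hne hcc
    -- u forces the intersection to be large
    have hint2 : (v ∩ w).card = v.card - 1 := by
      rcases huv with ⟨a1, a2⟩ | ⟨a1, a2⟩ <;> rcases huw with ⟨b1, b2⟩ | ⟨b1, b2⟩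
      · -- u ⊆ v, u ⊆ w
        have : u ⊆ v ∩ w := Finset.subset_inter a1 b1
        have := Finset.card_le_card this
        omega
      · omega
      · omega
      · -- v ⊆ u, w ⊆ u
        have : v ∪ w ⊆ u := Finset.union_subset a1 b1
        have := Finset.card_le_card this
        omega
    -- both the union and the intersection are common neighbours
    have hUf : v ∪ w ∈ (bdSimplex n).faces := by rw [mem_bd_card]; omega
    have hIf : v ∩ w ∈ (bdSimplex n).faces := by rw [mem_bd_card]; omega
    have e1 := huniq (v ∪ w) ⟨hUf, Or.inr ⟨Finset.subset_union_left, by omega⟩,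
      Or.inr ⟨Finset.subset_union_right, by omega⟩⟩
    have e2 := huniq (v ∩ w) ⟨hIf, Or.inl ⟨Finset.inter_subset_left, by omega⟩,
      Or.inl ⟨Finset.inter_subset_right, by omega⟩⟩
    have : (v ∪ w).card = (v ∩ w).card := by rw [e1, e2]
    omega
  · rintro ⟨hne, hcc, hext | hext⟩
    · -- level 1 : the unique common neighbour is the union
      have hint : (v ∩ w).card = 0 := by
        have := inter_card_le hne hcc
        omega
      have hU : (v ∪ w).card = 2 := by omega
      refine ⟨hne, v ∪ w, ⟨by rw [mem_bd_card]; omega,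
        Or.inr ⟨Finset.subset_union_left, by omega⟩,
        Or.inr ⟨Finset.subset_union_right, by omega⟩⟩, ?_⟩
      rintro u ⟨huf, huv, huw⟩
      obtain ⟨hu1, hu2⟩ := mem_bd_card.mp huf
      have hvu : v ⊆ u := by
        rcases huv with ⟨a1, a2⟩ | ⟨a1, a2⟩
        · exfalso
          have := Finset.card_le_card a1
          omega
        · exact a1
      have hwu : w ⊆ u := by
        rcases huw with ⟨b1, b2⟩ | ⟨b1, b2⟩
        · exfalso
          have := Finset.card_le_card b1
          omega
        · exact b1
      have hcu : u.card = 2 := by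
        rcases huv with ⟨a1, a2⟩ | ⟨a1, a2⟩
        · have := Finset.card_le_card a1; omega
        · omega
      exact (Finset.eq_of_subset_of_card_le (Finset.union_subset hvu hwu) (by omega)).symm
    · -- level n : the unique common neighbour is the intersection
      have hint : (v ∩ w).card + 1 ≤ v.card := inter_card_le hne hcc
      have hUcard : (v ∪ w).card ≤ n + 1 := by
        have := Finset.card_le_univ (v ∪ w); simpa using this
      have hI : (v ∩ w).card = n - 1 := by omega
      refine ⟨hne, v ∩ w, ⟨by rw [mem_bd_card]; omega,
        Or.inl ⟨Finset.inter_subset_left, by omega⟩,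
        Or.inl ⟨Finset.inter_subset_right, by omega⟩⟩, ?_⟩
      rintro u ⟨huf, huv, huw⟩
      obtain ⟨hu1, hu2⟩ := mem_bd_card.mp huf
      have huv' : u ⊆ v := by
        rcases huv with ⟨a1, a2⟩ | ⟨a1, a2⟩
        · exact a1
        · exfalso
          have := Finset.card_le_card a1
          omega
      have huw' : u ⊆ w := by
        rcases huw with ⟨b1, b2⟩ | ⟨b1, b2⟩
        · exact b1
        · exfalso
          have := Finset.card_le_card b1
          omega
      have hcu : u.card = n - 1 := by
        rcases huv with ⟨a1, a2⟩ | ⟨a1, a2⟩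
        · omega
        · have := Finset.card_le_card a1; omega
      exact Finset.eq_of_subset_of_card_le (Finset.subset_inter huv' huw') (by omega)

/-- transport of the `Rrel` relation along `gfun` -/
lemma gfun_R (hn : 2 ≤ n) {P₀ : Equiv.Perm (MVert (bdSimplex n))}
    (hP₀ : P₀ ∈ autK (morse (bdSimplex n))) {v w}
    (hv : v ∈ (bdSimplex n).faces) (hw : w ∈ (bdSimplex n).faces)
    (h : Rrel v w) : Rrel (gfun P₀ v) (gfun P₀ w) := by
  obtain ⟨hne, u, ⟨huf, huv, huw⟩, huniq⟩ := h
  refine ⟨fun hc => hne (gfun_inj hn hP₀ hv hw hc), gfun P₀ u,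
    ⟨gfun_face hn hP₀ huf, gfun_adj hn hP₀ huf hv huv, gfun_adj hn hP₀ huf hw huw⟩, ?_⟩
  rintro u' ⟨hu'f, hu'v, hu'w⟩
  have hgv := gfun_right_inv hn hP₀ hv
  have hgw := gfun_right_inv hn hP₀ hw
  have hguf := gfun_face hn (inv_mem hP₀) hu'f
  have h1 : Adjb (gfun P₀⁻¹ u') v := by
    have := gfun_adj hn (inv_mem hP₀) hu'f (gfun_face hn hP₀ hv) hu'v
    rwa [gfun_left_inv hn hP₀ hv] at this
  have h2 : Adjb (gfun P₀⁻¹ u') w := by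
    have := gfun_adj hn (inv_mem hP₀) hu'f (gfun_face hn hP₀ hw) hu'w
    rwa [gfun_left_inv hn hP₀ hw] at this
  have := huniq (gfun P₀⁻¹ u') ⟨hguf, h1, h2⟩
  rw [← this, gfun_right_inv hn hP₀ hu'f]

end MorseAux
namespace MorseAux
open Finset Equiv

variable {n : ℕ}

/-- faces of a fixed cardinality, as a finset -/
def Lset (n j : ℕ) : Finset (Finset (Fin (n+1))) :=
  Finset.univ.filter (fun s => 1 ≤ s.card ∧ s.card ≤ n ∧ s.card = j)

lemma mem_Lset {j} {s : Finset (Fin (n+1))} :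
    s ∈ Lset n j ↔ s ∈ (bdSimplex n).faces ∧ s.card = j := by
  rw [Lset, Finset.mem_filter, mem_bd_card]
  constructor
  · rintro ⟨-, h1, h2, h3⟩; exact ⟨⟨h1, h2⟩, h3⟩
  · rintro ⟨⟨h1, h2⟩, h3⟩; exact ⟨Finset.mem_univ _, h1, h2, h3⟩

section Classify

variable {g : Finset (Fin (n+1)) → Finset (Fin (n+1))}

lemma level_pres (hn : 2 ≤ n)
    (hface : ∀ v ∈ (bdSimplex n).faces, g v ∈ (bdSimplex n).faces)
    (hinj : ∀ v ∈ (bdSimplex n).faces, ∀ w ∈ (bdSimplex n).faces, g v = g w → v = w)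
    (hadj : ∀ v ∈ (bdSimplex n).faces, ∀ w ∈ (bdSimplex n).faces, Adjb v w → Adjb (g v) (g w))
    (hsing : ∀ a : Fin (n+1), (g {a}).card = 1) :
    ∀ k, ∀ v ∈ (bdSimplex n).faces, v.card = k → (g v).card = k := by
  intro k
  induction k using Nat.strong_induction_on with
  | _ k ih =>
    intro v hv hk
    obtain ⟨hc1, hc2⟩ := mem_bd_card.mp hv
    rcases Nat.lt_or_ge k 2 with hk1 | hk2
    · -- k = 1
      have hk1' : k = 1 := by omega
      obtain ⟨a, ha⟩ := Finset.card_eq_one.mp (by omega : v.card = 1)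
      rw [ha, hsing a, hk1']
    · -- k ≥ 2
      obtain ⟨x, hx⟩ := Finset.card_pos.mp (by omega : 0 < v.card)
      set u := v.erase x with hu
      have hucard : u.card = k - 1 := by rw [hu, Finset.card_erase_of_mem hx]; omega
      have huf : u ∈ (bdSimplex n).faces := mem_bd_card.mpr (by omega)
      have huv : Adjb u v := Or.inl ⟨Finset.erase_subset _ _, by omega⟩
      have hgu : (g u).card = k - 1 := ih (k-1) (by omega) u huf hucard
      have hga := hadj u huf v hv huv
      rcases hga with ⟨-, h⟩ | ⟨-, h⟩
      · omega
      · -- impossible : g v would live in level k - 2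
        exfalso
        have hgvcard : (g v).card = k - 2 := by omega
        have hgvpos : 1 ≤ (g v).card := card_pos_of_bd (hface v hv)
        have hk3 : 3 ≤ k := by omega
        -- g restricted to level k-2 is a bijection onto level k-2
        have himg : (Lset n (k-2)).image g ⊆ Lset n (k-2) := by
          intro s hs
          obtain ⟨t, ht, rfl⟩ := Finset.mem_image.mp hs
          obtain ⟨htf, htc⟩ := mem_Lset.mp ht
          exact mem_Lset.mpr ⟨hface t htf, ih (k-2) (by omega) t htf htc⟩
        have hcard : ((Lset n (k-2)).image g).card = (Lset n (k-2)).card := by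
          apply Finset.card_image_of_injOn
          intro s hs t ht hst
          exact hinj s (mem_Lset.mp hs).1 t (mem_Lset.mp ht).1 hst
        have heq : (Lset n (k-2)).image g = Lset n (k-2) :=
          Finset.eq_of_subset_of_card_le himg (by omega)
        have : g v ∈ (Lset n (k-2)).image g := by
          rw [heq]
          exact mem_Lset.mpr ⟨hface v hv, by omega⟩
        obtain ⟨t, ht, hgt⟩ := Finset.mem_image.mp this
        have htv := hinj t (mem_Lset.mp ht).1 v hv hgt
        have ht2 := (mem_Lset.mp ht).2
        rw [htv] at ht2
        omega

lemma classify (hn : 2 ≤ n)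
    (hface : ∀ v ∈ (bdSimplex n).faces, g v ∈ (bdSimplex n).faces)
    (hinj : ∀ v ∈ (bdSimplex n).faces, ∀ w ∈ (bdSimplex n).faces, g v = g w → v = w)
    (hadj : ∀ v ∈ (bdSimplex n).faces, ∀ w ∈ (bdSimplex n).faces, Adjb v w → Adjb (g v) (g w))
    (hsing : ∀ a : Fin (n+1), (g {a}).card = 1) :
    ∃ f : Equiv.Perm (Fin (n+1)), ∀ v ∈ (bdSimplex n).faces, g v = v.image ⇑f := by
  have hlevel := level_pres hn hface hinj hadj hsing
  have hsingf : ∀ a : Fin (n+1), ({a} : Finset (Fin (n+1))) ∈ (bdSimplex n).faces := by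
    intro a
    exact mem_bd_card.mpr (by rw [Finset.card_singleton]; omega)
  choose f0 hf0 using fun a => Finset.card_eq_one.mp (hsing a)
  have hf0inj : Function.Injective f0 := by
    intro a b hab
    have : g {a} = g {b} := by rw [hf0 a, hf0 b, hab]
    have := hinj _ (hsingf a) _ (hsingf b) this
    exact Finset.singleton_injective this
  obtain ⟨f, hf⟩ : ∃ f : Equiv.Perm (Fin (n+1)), ⇑f = f0 :=
    ⟨Equiv.ofBijective f0 (Finite.injective_iff_bijective.mp hf0inj), rfl⟩
  refine ⟨f, ?_⟩
  rw [hf]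
  -- strong induction on the cardinality
  suffices h : ∀ k, ∀ v ∈ (bdSimplex n).faces, v.card = k → g v = v.image f0 by
    intro v hv; exact h v.card v hv rfl
  intro k
  induction k using Nat.strong_induction_on with
  | _ k ih =>
    intro v hv hk
    obtain ⟨hc1, hc2⟩ := mem_bd_card.mp hv
    rcases Nat.lt_or_ge k 2 with hk1 | hk2
    · have hk1' : k = 1 := by omega
      obtain ⟨a, ha⟩ := Finset.card_eq_one.mp (by omega : v.card = 1)
      rw [ha, Finset.image_singleton]
      exact hf0 a
    · -- image f0 v ⊆ g v, and they have the same cardinality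
      have hsub : v.image f0 ⊆ g v := by
        intro b hb
        obtain ⟨x, hxv, rfl⟩ := Finset.mem_image.mp hb
        -- find y ∈ v with y ≠ x
        obtain ⟨y, hyv, hyx⟩ := Finset.exists_mem_ne (show 1 < v.card by omega) x
        set u := v.erase y with hu
        have hucard : u.card = k - 1 := by rw [hu, Finset.card_erase_of_mem hyv]; omega
        have huf : u ∈ (bdSimplex n).faces := mem_bd_card.mpr (by omega)
        have hxu : x ∈ u := Finset.mem_erase.mpr ⟨fun hc => hyx hc.symm, hxv⟩
        have huv : Adjb u v := Or.inl ⟨Finset.erase_subset _ _, by omega⟩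
        have hgusub : g u ⊆ g v := by
          rcases hadj u huf v hv huv with ⟨h1, -⟩ | ⟨h1, h2⟩
          · exact h1
          · exfalso
            have e1 := hlevel (k-1) u huf hucard
            have e2 := hlevel k v hv hk
            omega
        have hgu : g u = u.image f0 := ih (k-1) (by omega) u huf hucard
        exact hgusub (hgu ▸ Finset.mem_image_of_mem f0 hxu)
      have hcard : (v.image f0).card = (g v).card := by
        rw [Finset.card_image_of_injective _ hf0inj, hlevel k v hv hk, hk]
      exact (Finset.eq_of_subset_of_card_le hsub (by omega)).symm

end Classify

end MorseAux
namespace MorseAux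
open Finset Equiv

variable {n : ℕ}

lemma adjb_compl {v w : Finset (Fin (n+1))} (h : Adjb v w) : Adjb vᶜ wᶜ := by
  have hv := Finset.card_le_univ v
  have hw := Finset.card_le_univ w
  simp only [Finset.card_univ, Fintype.card_fin] at hv hw
  rcases h with ⟨h1, h2⟩ | ⟨h1, h2⟩
  · right
    refine ⟨Finset.compl_subset_compl.mpr h1, ?_⟩
    rw [card_compl_bd, card_compl_bd]; omega
  · left
    refine ⟨Finset.compl_subset_compl.mpr h1, ?_⟩
    rw [card_compl_bd, card_compl_bd]; omega

lemma sing_face (hn : 2 ≤ n) (a : Fin (n+1)) :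
    ({a} : Finset (Fin (n+1))) ∈ (bdSimplex n).faces :=
  mem_bd_card.mpr (by rw [Finset.card_singleton]; omega)

lemma phi0_surj (hn : 2 ≤ n) : Function.Surjective (phi0 (n := n)) := by
  rintro ⟨P₀, hP₀⟩
  have hface : ∀ v ∈ (bdSimplex n).faces, gfun P₀ v ∈ (bdSimplex n).faces :=
    fun v hv => gfun_face hn hP₀ hv
  have hinj : ∀ v ∈ (bdSimplex n).faces, ∀ w ∈ (bdSimplex n).faces,
      gfun P₀ v = gfun P₀ w → v = w :=
    fun v hv w hw h => gfun_inj hn hP₀ hv hw h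
  have hadj : ∀ v ∈ (bdSimplex n).faces, ∀ w ∈ (bdSimplex n).faces,
      Adjb v w → Adjb (gfun P₀ v) (gfun P₀ w) :=
    fun v hv w hw h => gfun_adj hn hP₀ hv hw h
  have hsf : ∀ a : Fin (n+1), ({a} : Finset (Fin (n+1))) ∈ (bdSimplex n).faces := sing_face hn
  have hnf : ∀ a : Fin (n+1), ({a} : Finset (Fin (n+1)))ᶜ ∈ (bdSimplex n).faces :=
    fun a => compl_mem_bd (hsf a)
  have hncard : ∀ a : Fin (n+1), ({a} : Finset (Fin (n+1)))ᶜ.card = n := by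
    intro a
    rw [card_compl_bd, Finset.card_singleton]
    omega
  -- transported R gives level rigidity
  have hRc : ∀ v w, v ∈ (bdSimplex n).faces → w ∈ (bdSimplex n).faces → v ≠ w →
      v.card = w.card → (v.card = 1 ∨ v.card = n) →
      ((gfun P₀ v).card = (gfun P₀ w).card ∧
        ((gfun P₀ v).card = 1 ∨ (gfun P₀ v).card = n)) := by
    intro v w hv hw hne hcc hx
    have := (Rchar hn (hface v hv) (hface w hw)).mp
      (gfun_R hn hP₀ hv hw ((Rchar hn hv hw).mpr ⟨hne, hcc, hx⟩))
    exact ⟨this.2.1, this.2.2⟩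
  have hnt : Nontrivial (Fin (n+1)) := nontrivial_fin hn
  set a0 : Fin (n+1) := 0 with ha0
  obtain ⟨b0, hb0⟩ := exists_ne a0
  -- all singletons share a level
  have hsameS : ∀ a : Fin (n+1), (gfun P₀ {a}).card = (gfun P₀ {a0}).card := by
    intro a
    by_cases ha : a = a0
    · rw [ha]
    · exact (hRc {a} {a0} (hsf a) (hsf a0)
        (fun h => ha (Finset.singleton_injective h))
        (by rw [Finset.card_singleton, Finset.card_singleton])
        (Or.inl (Finset.card_singleton a))).1
  have hextS : (gfun P₀ {a0}).card = 1 ∨ (gfun P₀ {a0}).card = n :=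
    (hRc {a0} {b0} (hsf a0) (hsf b0)
      (fun h => hb0 (Finset.singleton_injective h).symm)
      (by rw [Finset.card_singleton, Finset.card_singleton])
      (Or.inl (Finset.card_singleton a0))).2
  -- key dichotomy : get f with either g = f_* or g = f_* ∘ compl
  have hmain : (∃ f : Equiv.Perm (Fin (n+1)),
        ∀ v ∈ (bdSimplex n).faces, gfun P₀ v = v.image ⇑f) ∨
      (∃ f : Equiv.Perm (Fin (n+1)),
        ∀ v ∈ (bdSimplex n).faces, gfun P₀ v = vᶜ.image ⇑f) := by
    rcases hextS with he1 | hen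
    · left
      exact classify hn hface hinj hadj (fun a => by rw [hsameS a, he1])
    · right
      -- all n-element faces share a level, which must be 1
      have hsameN : ∀ v ∈ (bdSimplex n).faces, v.card = n →
          (gfun P₀ v).card = (gfun P₀ ({a0} : Finset (Fin (n+1)))ᶜ).card := by
        intro v hv hvc
        by_cases hva : v = ({a0} : Finset (Fin (n+1)))ᶜ
        · rw [hva]
        · exact (hRc v _ hv (hnf a0) hva (by rw [hvc, hncard]) (Or.inr hvc)).1
      have hextN : (gfun P₀ ({a0} : Finset (Fin (n+1)))ᶜ).card = 1 ∨
          (gfun P₀ ({a0} : Finset (Fin (n+1)))ᶜ).card = n :=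
        (hRc _ _ (hnf a0) (hnf b0)
          (fun h => hb0 (Finset.singleton_injective (compl_injective h)).symm)
          (by rw [hncard, hncard]) (Or.inr (hncard a0))).2
      have he'1 : (gfun P₀ ({a0} : Finset (Fin (n+1)))ᶜ).card = 1 := by
        rcases hextN with h | h
        · exact h
        · -- counting contradiction
          exfalso
          have hL1 : (Lset n 1).card = n + 1 := by
            have : Lset n 1 =
                Finset.univ.image (fun a : Fin (n+1) => ({a} : Finset (Fin (n+1)))) := by
              ext s
              rw [mem_Lset, Finset.mem_image]
              constructor
              · rintro ⟨hf, hc⟩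
                obtain ⟨a, rfl⟩ := Finset.card_eq_one.mp hc
                exact ⟨a, Finset.mem_univ a, rfl⟩
              · rintro ⟨a, -, rfl⟩
                exact ⟨hsf a, Finset.card_singleton a⟩
            rw [this, Finset.card_image_of_injective _ Finset.singleton_injective,
              Finset.card_univ, Fintype.card_fin]
          have hLn : (Lset n n).card ≤ n + 1 := by
            have hsub : Lset n n ⊆
                Finset.univ.image (fun a : Fin (n+1) => ({a} : Finset (Fin (n+1)))ᶜ) := by
              intro s hs
              obtain ⟨hf, hc⟩ := mem_Lset.mp hs
              have : sᶜ.card = 1 := by rw [card_compl_bd, hc]; omega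
              obtain ⟨a, ha⟩ := Finset.card_eq_one.mp this
              refine Finset.mem_image.mpr ⟨a, Finset.mem_univ a, ?_⟩
              rw [← ha, compl_compl]
            calc (Lset n n).card ≤ _ := Finset.card_le_card hsub
              _ ≤ Finset.univ.card := Finset.card_image_le
              _ = n + 1 := by rw [Finset.card_univ, Fintype.card_fin]
          have hLn1 : 0 < (Lset n n).card :=
            Finset.card_pos.mpr ⟨({a0} : Finset (Fin (n+1)))ᶜ, mem_Lset.mpr ⟨hnf a0, hncard a0⟩⟩
          set S := Lset n 1 ∪ Lset n n with hS
          have hdisj : Disjoint (Lset n 1) (Lset n n) := by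
            rw [Finset.disjoint_left]
            intro s hs1 hsn
            have h1 := (mem_Lset.mp hs1).2
            have h2 := (mem_Lset.mp hsn).2
            omega
          have hScard : S.card = (Lset n 1).card + (Lset n n).card :=
            Finset.card_union_of_disjoint hdisj
          have himgsub : S.image (gfun P₀) ⊆ Lset n n := by
            intro s hs
            obtain ⟨t, ht, rfl⟩ := Finset.mem_image.mp hs
            rcases Finset.mem_union.mp ht with ht1 | htn
            · obtain ⟨htf, htc⟩ := mem_Lset.mp ht1
              obtain ⟨a, rfl⟩ := Finset.card_eq_one.mp htc
              exact mem_Lset.mpr ⟨hface _ htf, by rw [hsameS a, hen]⟩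
            · obtain ⟨htf, htc⟩ := mem_Lset.mp htn
              exact mem_Lset.mpr ⟨hface _ htf, by rw [hsameN t htf htc, h]⟩
          have hSinj : (S.image (gfun P₀)).card = S.card := by
            apply Finset.card_image_of_injOn
            intro s hs t ht hst
            have hsf' : s ∈ (bdSimplex n).faces := by
              rcases Finset.mem_union.mp hs with h' | h' <;> exact (mem_Lset.mp h').1
            have htf' : t ∈ (bdSimplex n).faces := by
              rcases Finset.mem_union.mp ht with h' | h' <;> exact (mem_Lset.mp h').1
            exact hinj s hsf' t htf' hst
          have := Finset.card_le_card himgsub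
          omega
      -- now classify g ∘ compl
      have hclass := classify hn
        (g := fun v => gfun P₀ vᶜ)
        (fun v hv => hface vᶜ (compl_mem_bd hv))
        (fun v hv w hw h => compl_injective
          (hinj vᶜ (compl_mem_bd hv) wᶜ (compl_mem_bd hw) h))
        (fun v hv w hw h => hadj vᶜ (compl_mem_bd hv) wᶜ (compl_mem_bd hw) (adjb_compl h))
        (fun a => by
          rw [show (gfun P₀ ({a} : Finset (Fin (n+1)))ᶜ).card
              = (gfun P₀ ({a0} : Finset (Fin (n+1)))ᶜ).card from
            hsameN _ (hnf a) (hncard a), he'1])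
      obtain ⟨f, hf⟩ := hclass
      refine ⟨f, fun v hv => ?_⟩
      have h2 : gfun P₀ vᶜᶜ = Finset.image ⇑f vᶜ := hf vᶜ (compl_mem_bd hv)
      rwa [compl_compl] at h2
  -- conclude
  have hcds1 : ∀ p : MVert (bdSimplex n), cds (P₀ p) (gfun P₀ p.val.1) :=
    fun p => (gfun_spec hn hP₀ p.2.1).2 p (cds_fst p)
  have hcds2 : ∀ p : MVert (bdSimplex n), cds (P₀ p) (gfun P₀ p.val.2) :=
    fun p => (gfun_spec hn hP₀ p.2.2.1).2 p (cds_snd p)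
  have hstne : ∀ p : MVert (bdSimplex n), p.val.1 ≠ p.val.2 := by
    intro p hc
    have := p.2.2.2.2
    rw [hc] at this
    omega
  have hgne : ∀ p : MVert (bdSimplex n), gfun P₀ p.val.1 ≠ gfun P₀ p.val.2 :=
    fun p hc => hstne p (hinj _ p.2.1 _ p.2.2.1 hc)
  rcases hmain with ⟨f, hf⟩ | ⟨f, hf⟩
  · -- P₀ = Fe f
    refine ⟨(⟨f, perm_mem_autK_bd f⟩, 1), ?_⟩
    apply Subtype.ext
    show Fe f * Pm ^ (Multiplicative.toAdd (1 : Multiplicative (ZMod 2))).val = P₀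
    rw [show (Multiplicative.toAdd (1 : Multiplicative (ZMod 2))).val = 0 by rfl,
      pow_zero, mul_one]
    apply Equiv.ext
    intro p
    apply mvext
    have hcards : (gfun P₀ p.val.2).card = (gfun P₀ p.val.1).card + 1 := by
      rw [hf _ p.2.1, hf _ p.2.2.1, Finset.card_image_of_injective _ f.injective,
        Finset.card_image_of_injective _ f.injective]
      exact p.2.2.2.2
    rcases cds_two (hcds1 p) (hcds2 p) (hgne p) with ⟨he, -⟩ | ⟨-, hc⟩
    · rw [Fe_val, he, hf _ p.2.1, hf _ p.2.2.1]
      rfl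
    · exfalso; omega
  · -- P₀ = Fe f * Pm
    refine ⟨(⟨f, perm_mem_autK_bd f⟩, Multiplicative.ofAdd 1), ?_⟩
    apply Subtype.ext
    show Fe f * Pm ^ (Multiplicative.toAdd (Multiplicative.ofAdd (1 : ZMod 2))).val = P₀
    rw [show (Multiplicative.toAdd (Multiplicative.ofAdd (1 : ZMod 2))).val = 1 by rfl,
      pow_one]
    apply Equiv.ext
    intro p
    apply mvext
    have hculeq : ∀ s : Finset (Fin (n+1)), s.card ≤ n + 1 := by
      intro s
      have := Finset.card_le_univ s; simpa using this
    have hcards : (gfun P₀ p.val.1).card = (gfun P₀ p.val.2).card + 1 := by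
      rw [hf _ p.2.1, hf _ p.2.2.1, Finset.card_image_of_injective _ f.injective,
        Finset.card_image_of_injective _ f.injective, card_compl_bd, card_compl_bd]
      have h1 := p.2.2.2.2
      have h2 := hculeq p.val.2
      omega
    rcases cds_two (hcds2 p) (hcds1 p) (hgne p).symm with ⟨he, -⟩ | ⟨-, hc⟩
    · show (Fe f (Pm p)).val = (P₀ p).val
      rw [Fe_val, Pm_val, he, hf _ p.2.1, hf _ p.2.2.1]
      rfl
    · exfalso; omega

end MorseAux
/-- for `n ≥ 2`, `Aut(M(∂Δⁿ)) ≅ Aut(∂Δⁿ) × ℤ/2ℤ`, via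
`(f, i) ↦ f_* ∘ π_*^i`, where `π_*` is the ghost automorphism induced by the
complementation map `σ ↦ δ - σ`. -/
theorem autMorse_bd (n : ℕ) (hn : 2 ≤ n) :
    ∃ P : Equiv.Perm (MVert (bdSimplex n)),
      P ∈ autK (morse (bdSimplex n)) ∧
      (∀ p : MVert (bdSimplex n), (P p).val = (p.val.2ᶜ, p.val.1ᶜ)) ∧
      ∃ φ : autK (bdSimplex n) × Multiplicative (ZMod 2) ≃* autK (morse (bdSimplex n)),
        ∀ (f : autK (bdSimplex n)) (p : MVert (bdSimplex n)),
          ((φ (f, 1) : Equiv.Perm (MVert (bdSimplex n))) p).val =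
            (p.val.1.image ⇑(f : Equiv.Perm (Fin (n + 1))),
             p.val.2.image ⇑(f : Equiv.Perm (Fin (n + 1)))) ∧
          ((φ (f, Multiplicative.ofAdd 1) : Equiv.Perm (MVert (bdSimplex n))) p) =
            (φ (f, 1) : Equiv.Perm (MVert (bdSimplex n))) (P p) := by
  classical
  refine ⟨MorseAux.Pm, MorseAux.Pm_mem, fun p => rfl, ?_⟩
  refine ⟨MulEquiv.ofBijective MorseAux.phi0
    ⟨MorseAux.phi0_inj hn, MorseAux.phi0_surj hn⟩, ?_⟩
  intro f p
  have h1 : ((MulEquiv.ofBijective MorseAux.phi0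
      ⟨MorseAux.phi0_inj hn, MorseAux.phi0_surj hn⟩ (f, 1) :
        Equiv.Perm (MVert (bdSimplex n)))) = MorseAux.Fe f.val := by
    show MorseAux.Fe f.val *
      MorseAux.Pm ^ (Multiplicative.toAdd (1 : Multiplicative (ZMod 2))).val = MorseAux.Fe f.val
    rw [show (Multiplicative.toAdd (1 : Multiplicative (ZMod 2))).val = 0 from rfl,
      pow_zero, mul_one]
  have h2 : ((MulEquiv.ofBijective MorseAux.phi0
      ⟨MorseAux.phi0_inj hn, MorseAux.phi0_surj hn⟩ (f, Multiplicative.ofAdd 1) :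
        Equiv.Perm (MVert (bdSimplex n)))) = MorseAux.Fe f.val * MorseAux.Pm := by
    show MorseAux.Fe f.val *
      MorseAux.Pm ^ (Multiplicative.toAdd (Multiplicative.ofAdd (1 : ZMod 2))).val
        = MorseAux.Fe f.val * MorseAux.Pm
    rw [show (Multiplicative.toAdd (Multiplicative.ofAdd (1 : ZMod 2))).val = 1 from rfl,
      pow_one]
  constructor
  · rw [h1, MorseAux.Fe_val]
    rfl
  · rw [h1, h2, Equiv.Perm.mul_apply]
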